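/- Let p be a prime and let G = A ⋊ C₂ be the semidirect product of the Prüfer p-group A = C_{p^∞} by the cyclic group C₂ = ⟨d⟩ of order 2, where d acts on A by inversion (a^d = a⁻¹ for all a ∈ A). Then every tensor x ∈ T⊗(G) satisfies |x^{ν(G)}| ≤ 4, i.e. every tensor has at most 4 conjugates in ν(G). -/

import Mathlib

namespace TensorNu

universe u

/-- The commutator `[x,y] = x⁻¹y⁻¹xy`. -/
def comm {K : Type*} [Group K] (x y : K) : K := x⁻¹ * y⁻¹ * x * y

/-- Conjugation `x^y = y⁻¹xy`. -/
def conj {K : Type*} [Group K] (x y : K) : K := y⁻¹ * x * y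

variable (G : Type u) [Group G]

/-- The defining relators of `ν(G)`, as elements of the free group on `G ⊕ G`,
where `Sum.inl` corresponds to the canonical copy of `G` and `Sum.inr` to the
isomorphic copy `G^φ` (`g ↦ g^φ`).  They comprise the multiplication tables of
`G` and of `G^φ`, together with the relations
`[g₁,g₂^φ]^{g₃} = [g₁^{g₃},(g₂^{g₃})^φ]` and `[g₁,g₂^φ]^{g₃} = [g₁,g₂^φ]^{g₃^φ}`. -/
def nuRels : Set (FreeGroup (G ⊕ G)) :=
  {r | (∃ g h : G, r = FreeGroup.of (Sum.inl g) * FreeGroup.of (Sum.inl h) *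
          (FreeGroup.of (Sum.inl (g * h)))⁻¹)
     ∨ (∃ g h : G, r = FreeGroup.of (Sum.inr g) * FreeGroup.of (Sum.inr h) *
          (FreeGroup.of (Sum.inr (g * h)))⁻¹)
     ∨ (∃ g₁ g₂ g₃ : G, r =
          conj (comm (FreeGroup.of (Sum.inl g₁)) (FreeGroup.of (Sum.inr g₂)))
              (FreeGroup.of (Sum.inl g₃)) *
            (comm (FreeGroup.of (Sum.inl (conj g₁ g₃)))
              (FreeGroup.of (Sum.inr (conj g₂ g₃))))⁻¹)
     ∨ (∃ g₁ g₂ g₃ : G, r =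
          conj (comm (FreeGroup.of (Sum.inl g₁)) (FreeGroup.of (Sum.inr g₂)))
              (FreeGroup.of (Sum.inl g₃)) *
            (conj (comm (FreeGroup.of (Sum.inl g₁)) (FreeGroup.of (Sum.inr g₂)))
              (FreeGroup.of (Sum.inr g₃)))⁻¹)}

/-- The group `ν(G)`. -/
abbrev Nu := PresentedGroup (nuRels G)

/-- The canonical image of `g ∈ G` in `ν(G)`. -/
def ι (g : G) : Nu G := PresentedGroup.of (Sum.inl g)

/-- The canonical image `g^φ` of `g ∈ G` (via the copy `G^φ`) in `ν(G)`. -/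
def ιφ (g : G) : Nu G := PresentedGroup.of (Sum.inr g)

-- pure group identities
section PureGroup
variable {K : Type*} [Group K]

@[simp] lemma conj_one_right (x : K) : conj x 1 = x := by simp [conj]
@[simp] lemma one_conj (x : K) : conj (1 : K) x = 1 := by simp [conj]
lemma conj_mul (s x y : K) : conj s (x * y) = conj (conj s x) y := by
  simp [conj, mul_assoc]
@[simp] lemma comm_one_left (x : K) : comm (1 : K) x = 1 := by simp [comm]
@[simp] lemma comm_one_right (x : K) : comm x (1 : K) = 1 := by simp [comm]
lemma comm_mul_left (x y z : K) :
    comm (x * y) z = conj (comm x z) y * comm y z := by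
  simp only [comm, conj]; group
lemma comm_mul_right (x y z : K) :
    comm x (y * z) = comm x z * conj (comm x y) z := by
  simp only [comm, conj]; group
lemma nu_map_comm {K' : Type*} [Group K'] (f : K →* K') (x y : K) :
    f (comm x y) = comm (f x) (f y) := by simp [comm]
lemma nu_map_conj {K' : Type*} [Group K'] (f : K →* K') (x y : K) :
    f (conj x y) = conj (f x) (f y) := by simp [conj]

lemma commute_of_conj {u v : K} (h : conj u v = u) : Commute u v := by
  unfold conj at h
  show u * v = v * u
  calc u * v = v * (v⁻¹ * u * v) := by group
    _ = v * u := by rw [h]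

lemma conj_eq_of_commute {u v : K} (h : Commute u v) : conj u v = u := by
  unfold conj
  rw [mul_assoc, h.eq, ← mul_assoc, inv_mul_cancel, one_mul]

end PureGroup

section NuBasic
variable {G}

lemma relOne {r : FreeGroup (G ⊕ G)} (h : r ∈ nuRels G) :
    PresentedGroup.mk (nuRels G) r = 1 :=
  (QuotientGroup.eq_one_iff r).mpr (Subgroup.subset_normalClosure h)

lemma ι_mul (g h : G) : ι G (g * h) = ι G g * ι G h := by
  have h1 := relOne (G := G) (Or.inl ⟨g, h, rfl⟩)
  rw [map_mul, map_mul, map_inv, mul_inv_eq_one] at h1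
  exact h1.symm

lemma ιφ_mul (g h : G) : ιφ G (g * h) = ιφ G g * ιφ G h := by
  have h1 := relOne (G := G) (Or.inr (Or.inl ⟨g, h, rfl⟩))
  rw [map_mul, map_mul, map_inv, mul_inv_eq_one] at h1
  exact h1.symm

@[simp] lemma ι_one : ι G 1 = 1 := by
  have h := ι_mul (G := G) 1 1
  rw [mul_one] at h
  exact (left_eq_mul.mp h)

@[simp] lemma ιφ_one : ιφ G 1 = 1 := by
  have h := ιφ_mul (G := G) 1 1
  rw [mul_one] at h
  exact (left_eq_mul.mp h)

lemma ι_inv (g : G) : ι G g⁻¹ = (ι G g)⁻¹ := by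
  have h := ι_mul (G := G) g⁻¹ g
  rw [inv_mul_cancel, ι_one] at h
  exact eq_inv_of_mul_eq_one_left h.symm

lemma ιφ_inv (g : G) : ιφ G g⁻¹ = (ιφ G g)⁻¹ := by
  have h := ιφ_mul (G := G) g⁻¹ g
  rw [inv_mul_cancel, ιφ_one] at h
  exact eq_inv_of_mul_eq_one_left h.symm

lemma conj_tensor (g₁ g₂ g₃ : G) :
    conj (comm (ι G g₁) (ιφ G g₂)) (ι G g₃)
      = comm (ι G (conj g₁ g₃)) (ιφ G (conj g₂ g₃)) := by
  have h1 := relOne (G := G) (Or.inr (Or.inr (Or.inl ⟨g₁, g₂, g₃, rfl⟩)))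
  simp only [map_mul, map_inv, nu_map_conj, nu_map_comm] at h1
  rw [mul_inv_eq_one] at h1
  exact h1

lemma conj_tensor_φ (g₁ g₂ g₃ : G) :
    conj (comm (ι G g₁) (ιφ G g₂)) (ιφ G g₃)
      = conj (comm (ι G g₁) (ιφ G g₂)) (ι G g₃) := by
  have h1 := relOne (G := G) (Or.inr (Or.inr (Or.inr ⟨g₁, g₂, g₃, rfl⟩)))
  simp only [map_mul, map_inv, nu_map_conj, nu_map_comm] at h1
  rw [mul_inv_eq_one] at h1
  exact h1.symm

end NuBasic

/-- The set `T⊗(G)` of tensors `[a, b^φ]`, `a, b ∈ G`. -/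
def tensorSet : Set (Nu G) := {x | ∃ a b : G, x = comm (ι G a) (ιφ G b)}

/-- The image of `G` in `ν(G)` as a subgroup. -/
def GSub : Subgroup (Nu G) := Subgroup.closure (Set.range (ι G))

/-- The image of `G^φ` in `ν(G)` as a subgroup. -/
def GφSub : Subgroup (Nu G) := Subgroup.closure (Set.range (ιφ G))

/-- The non-abelian tensor square `[G, G^φ] ≤ ν(G)`. -/
def tensorSquare : Subgroup (Nu G) := ⁅GSub G, GφSub G⁆

/-- `[S, x]`: the subgroup generated by the commutators `[s, x]`, `s ∈ S`. -/
def commSub {K : Type*} [Group K] (S : Set K) (x : K) : Subgroup K :=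
  Subgroup.closure {c | ∃ s ∈ S, c = comm s x}

end TensorNu

namespace TensorNu

/-- `ℚ/ℤ`. -/
abbrev QZ : Type := ℚ ⧸ AddSubgroup.zmultiples (1 : ℚ)

/-- The Prüfer `p`-group `C_{p^∞}`, the `p`-primary part of `ℚ/ℤ`
(written multiplicatively). -/
abbrev Prufer (p : ℕ) [Fact p.Prime] : Type :=
  Multiplicative (AddCommGroup.primaryComponent QZ p)

/-- The cyclic group `C₂ = ⟨d⟩` of order `2`, where `d` is the inversion
automorphism `a ↦ a⁻¹` of the Prüfer `p`-group. -/
def invC2 (p : ℕ) [Fact p.Prime] : Subgroup (MulAut (Prufer p)) :=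
  Subgroup.zpowers (MulEquiv.inv (Prufer p))

/-- The semidirect product `G = C_{p^∞} ⋊ C₂`, where `d` acts by inversion. -/
abbrev PruferSd (p : ℕ) [Fact p.Prime] : Type :=
  Prufer p ⋊[(invC2 p).subtype] (invC2 p)

section PruferFacts
variable (p : ℕ) [Fact p.Prime]

lemma prufer_torsion (x : Prufer p) : ∃ n : ℕ, x ^ p ^ n = 1 := by
  obtain ⟨n, hn⟩ := x.toAdd.2
  refine ⟨n, ?_⟩
  have h0 : (p ^ n) • x.toAdd = 0 := by
    apply Subtype.ext
    push_cast
    rw [← hn]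
  have h1 : (x ^ p ^ n).toAdd = 0 := by rw [toAdd_pow]; exact h0
  exact toAdd_eq_zero.mp h1

lemma prufer_root (x : Prufer p) (j : ℕ) : ∃ y : Prufer p, y ^ p ^ j = x := by
  have hp : p.Prime := Fact.out
  have hp0 : (0 : ℚ) < (p : ℚ) := by exact_mod_cast hp.pos
  have hpj : ((p : ℚ)) ^ j ≠ 0 := ne_of_gt (pow_pos hp0 j)
  obtain ⟨n, hn⟩ := prufer_torsion p x
  obtain ⟨q, hq⟩ := QuotientAddGroup.mk_surjective (↑x.toAdd : QZ)
  set y0 : QZ := QuotientAddGroup.mk (q / (p : ℚ) ^ j) with hy0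
  have keysmul : ∀ r : ℚ, ((p ^ j : ℕ) • (QuotientAddGroup.mk r : QZ))
      = QuotientAddGroup.mk ((p ^ j : ℕ) • r) := by
    intro r
    exact (map_nsmul (QuotientAddGroup.mk' (AddSubgroup.zmultiples (1 : ℚ))) (p ^ j) r).symm
  have hyx : (p ^ j) • y0 = (↑x.toAdd : QZ) := by
    rw [hy0, keysmul, ← hq]
    congr 1
    rw [nsmul_eq_mul, Nat.cast_pow, mul_comm, div_mul_cancel₀ _ hpj]
  have h3' : (p ^ n) • x.toAdd = 0 := by
    have h4 := congrArg Multiplicative.toAdd hn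
    rw [toAdd_pow] at h4
    exact h4.trans rfl
  have h3 : (p ^ n) • (↑x.toAdd : QZ) = 0 := by
    have := congrArg Subtype.val h3'
    push_cast at this
    simpa using this
  have h2 : (p ^ n * p ^ j) • y0 = 0 := by
    rw [mul_smul, hyx, h3]
  have hdvd : addOrderOf y0 ∣ p ^ (n + j) := by
    rw [pow_add]; exact addOrderOf_dvd_of_nsmul_eq_zero h2
  obtain ⟨m, _, hm2⟩ := (Nat.dvd_prime_pow hp).mp hdvd
  refine ⟨Multiplicative.ofAdd ⟨y0, ⟨m, by rw [← hm2]; exact addOrderOf_nsmul_eq_zero y0⟩⟩, ?_⟩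
  apply Multiplicative.toAdd.injective
  rw [toAdd_pow]
  apply Subtype.ext
  push_cast
  simpa using hyx

lemma prufer_sq (x : Prufer p) : ∃ y : Prufer p, y ^ 2 = x := by
  rcases (Fact.out : p.Prime).eq_two_or_odd' with h2 | hodd
  · subst h2
    obtain ⟨y, hy⟩ := prufer_root 2 x 1
    norm_num at hy
    exact ⟨y, hy⟩
  · obtain ⟨n, hn⟩ := prufer_torsion p x
    refine ⟨x ^ ((p ^ n + 1) / 2), ?_⟩
    rw [← pow_mul]
    have he : Even (p ^ n + 1) := (hodd.pow).add_one
    rw [Nat.div_mul_cancel he.two_dvd, pow_add, hn, pow_one, one_mul]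

lemma prufer_fourth (x : Prufer p) : ∃ y : Prufer p, y ^ 4 = x := by
  obtain ⟨y, hy⟩ := prufer_sq p x
  obtain ⟨z, hz⟩ := prufer_sq p y
  exact ⟨z, by rw [show (4 : ℕ) = 2 * 2 from rfl, pow_mul, hz, hy]⟩

end PruferFacts




section Gamma
variable (p : ℕ) [Fact p.Prime]

open SemidirectProduct

/-- The reflection `d` as an element of `invC2 p`. -/
def dd : invC2 p := ⟨MulEquiv.inv (Prufer p), Subgroup.mem_zpowers _⟩

lemma invAut_sq : MulEquiv.inv (Prufer p) * MulEquiv.inv (Prufer p) = 1 := by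
  ext x
  simp [MulAut.mul_apply]

lemma dd_sq : dd p * dd p = 1 := by
  apply Subtype.ext
  rw [Subgroup.coe_mul, Subgroup.coe_one]
  exact invAut_sq p

lemma dd_inv : (dd p)⁻¹ = dd p := inv_eq_of_mul_eq_one_left (dd_sq p)

lemma mem_invC2 (e : invC2 p) : e = 1 ∨ e = dd p := by
  obtain ⟨k, hk⟩ := Subgroup.mem_zpowers_iff.mp e.2
  have hsq : (MulEquiv.inv (Prufer p)) ^ (2 : ℤ) = 1 := by
    rw [zpow_two]; exact invAut_sq p
  rcases Int.even_or_odd k with ⟨m, hm⟩ | ⟨m, hm⟩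
  · left
    apply Subtype.ext
    rw [← hk, hm, ← two_mul, zpow_mul, hsq, one_zpow, Subgroup.coe_one]
  · right
    apply Subtype.ext
    rw [← hk, hm, zpow_add, zpow_mul, hsq, one_zpow, one_mul, zpow_one]
    rfl

lemma right_one_eq_inl {g : PruferSd p} (h : g.right = 1) :
    g = inl g.left := by
  refine SemidirectProduct.ext ?_ ?_
  · simp
  · simp [h]

@[simp] lemma dd_act (x : Prufer p) : ((invC2 p).subtype (dd p)) x = x⁻¹ := rfl

@[simp] lemma dd_coe_act (x : Prufer p) : ((dd p : MulAut (Prufer p))) x = x⁻¹ := rfl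

lemma conj_inl_inl (u c : Prufer p) :
    conj (inl u : PruferSd p) (inl c) = inl u := by
  unfold conj
  rw [← map_inv, ← map_mul, ← map_mul]
  congr 1
  rw [mul_comm c⁻¹ u, inv_mul_cancel_right]

lemma conj_g_inl {g : PruferSd p} (hg : g.right = dd p) (c : Prufer p) :
    conj g (inl c) = inl (c⁻¹ * c⁻¹) * g := by
  unfold conj
  refine SemidirectProduct.ext ?_ ?_
  · simp [hg, mul_comm, mul_left_comm, mul_assoc]
  · simp

lemma conj_inl_g {g : PruferSd p} (hg : g.right = dd p) (k : Prufer p) :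
    conj (inl k : PruferSd p) g = inl k⁻¹ := by
  unfold conj
  refine SemidirectProduct.ext ?_ ?_
  · simp [hg, dd_inv, mul_comm, mul_left_comm]
  · simp

lemma comm_inl_g {g : PruferSd p} (hg : g.right = dd p) (k : Prufer p) :
    comm (inl k : PruferSd p) g = inl (k⁻¹ * k⁻¹) := by
  have h : comm (inl k : PruferSd p) g = (inl k)⁻¹ * conj (inl k : PruferSd p) g := by
    unfold comm conj; group
  rw [h, conj_inl_g p hg, ← map_inv, ← map_mul]

lemma comm_right_one {a b : PruferSd p} (ha : a.right = dd p) (hb : b.right = dd p) :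
    (comm a b).right = 1 := by
  have : (comm a b).right = a.right⁻¹ * b.right⁻¹ * a.right * b.right := by
    simp [comm]
  rw [this, ha, hb, dd_inv]
  rw [show dd p * dd p * dd p * dd p = (dd p * dd p) * (dd p * dd p) by group]
  rw [dd_sq, one_mul]

lemma conj_right_eq {x y : PruferSd p} (hx : x.right = dd p) (hy : y.right = dd p) :
    (conj y x).right = y.right := by
  have : (conj y x).right = x.right⁻¹ * y.right * x.right := by simp [conj, mul_assoc]
  rw [this, hx, hy, dd_inv, dd_sq, one_mul]

lemma decomp {b g : PruferSd p} (h : g.right = b.right) :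
    ∃ s : Prufer p, g = inl s * b := by
  refine ⟨g.left * b.left⁻¹, ?_⟩
  refine SemidirectProduct.ext ?_ ?_
  · simp [mul_assoc]
  · simp [h]

end Gamma




section TensorCalc
variable (p : ℕ) [Fact p.Prime]

open SemidirectProduct

/-- The tensor `[a, b^φ]` in `ν(G)` for `G = C_{p^∞} ⋊ C₂`. -/
def Tn (a b : PruferSd p) : Nu (PruferSd p) :=
  comm (ι (PruferSd p) a) (ιφ (PruferSd p) b)

lemma conjT (a b g : PruferSd p) :
    conj (Tn p a b) (ι (PruferSd p) g) = Tn p (conj a g) (conj b g) :=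
  conj_tensor a b g

lemma conjTφ (a b g : PruferSd p) :
    conj (Tn p a b) (ιφ (PruferSd p) g) = conj (Tn p a b) (ι (PruferSd p) g) :=
  conj_tensor_φ a b g

lemma Tn_mul_left (x y b : PruferSd p) :
    Tn p (x * y) b = conj (Tn p x b) (ι (PruferSd p) y) * Tn p y b := by
  unfold Tn
  rw [ι_mul, comm_mul_left]

lemma Tn_mul_right (x y z : PruferSd p) :
    Tn p x (y * z) = Tn p x z * conj (Tn p x y) (ιφ (PruferSd p) z) := by
  unfold Tn
  rw [ιφ_mul, comm_mul_right]

lemma T_pow_left (w v : Prufer p) (m : ℕ) :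
    Tn p (inl (w ^ m)) (inl v) = (Tn p (inl w) (inl v)) ^ m := by
  induction m with
  | zero => simp [Tn]
  | succ m ih =>
      rw [pow_succ, map_mul, Tn_mul_left, conjT, conj_inl_inl, conj_inl_inl, ih, pow_succ]

lemma T_pow_right (w v : Prufer p) (m : ℕ) :
    Tn p (inl w) (inl (v ^ m)) = (Tn p (inl w) (inl v)) ^ m := by
  induction m with
  | zero => simp [Tn]
  | succ m ih =>
      rw [pow_succ', map_mul, Tn_mul_right, conjTφ, conjT, conj_inl_inl, conj_inl_inl, ih,
        pow_succ]

lemma T_A_A (u v : Prufer p) : Tn p (inl u) (inl v) = 1 := by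
  obtain ⟨n, hn⟩ := prufer_torsion p v
  obtain ⟨w, hw⟩ := prufer_root p u n
  rw [← hw, T_pow_left, ← T_pow_right, hn]
  simp [Tn]

lemma absorb_right (a z : PruferSd p) (v : Prufer p)
    (h : Tn p a (inl v) = 1) : Tn p a (inl v * z) = Tn p a z := by
  rw [Tn_mul_right, h, one_conj, mul_one]

lemma absorb_left (a z : PruferSd p) (v : Prufer p)
    (h : Tn p (inl v) z = 1) : Tn p (inl v * a) z = Tn p a z := by
  rw [Tn_mul_left, h, one_conj, one_mul]

lemma conj_T_inl_any (u : Prufer p) (b : PruferSd p) (c : Prufer p) :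
    conj (Tn p (inl u) b) (ι (PruferSd p) (inl c)) = Tn p (inl u) b := by
  rw [conjT, conj_inl_inl]
  rcases mem_invC2 p b.right with h | h
  · rw [right_one_eq_inl p h, conj_inl_inl]
  · rw [conj_g_inl p h]
    exact absorb_right p _ _ _ (T_A_A p u _)

lemma conj_T_any_inl (a : PruferSd p) (u c : Prufer p) :
    conj (Tn p a (inl u)) (ι (PruferSd p) (inl c)) = Tn p a (inl u) := by
  rw [conjT, conj_inl_inl]
  rcases mem_invC2 p a.right with h | h
  · rw [right_one_eq_inl p h, conj_inl_inl]
  · rw [conj_g_inl p h]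
    exact absorb_left p _ _ _ (T_A_A p _ u)

lemma conj_T_comm (a b g h : PruferSd p) :
    conj (Tn p a b) (comm (ι (PruferSd p) g) (ιφ (PruferSd p) h))
      = conj (Tn p a b) (ι (PruferSd p) (comm g h)) := by
  have e1 : comm (ι (PruferSd p) g) (ιφ (PruferSd p) h)
      = (ι (PruferSd p) g)⁻¹ * (ιφ (PruferSd p) h)⁻¹ * ι (PruferSd p) g
          * ιφ (PruferSd p) h := rfl
  rw [e1, ← ι_inv, ← ιφ_inv, conj_mul, conj_mul, conj_mul]
  rw [show conj (Tn p a b) (ι (PruferSd p) g⁻¹) = Tn p (conj a g⁻¹) (conj b g⁻¹) from conjT p a b g⁻¹]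
  rw [conjTφ, conjT, conjT, conjTφ, conjT, conjT]
  congr 1 <;> · simp only [conj, comm]; group

end TensorCalc




section MainCase
variable (p : ℕ) [Fact p.Prime]

open SemidirectProduct

lemma M_inv {b : PruferSd p} (hb : b.right = dd p) (k : Prufer p) :
    Tn p (inl k⁻¹) b = (Tn p (inl k) b)⁻¹ := by
  have h0 : Tn p ((inl k⁻¹ : PruferSd p) * inl k) b = 1 := by
    rw [← map_mul, inv_mul_cancel, map_one]
    simp [Tn]
  rw [Tn_mul_left, conj_T_inl_any] at h0
  exact eq_inv_of_mul_eq_one_left h0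

lemma L_inv (a : PruferSd p) (k : Prufer p) :
    Tn p a (inl k⁻¹) = (Tn p a (inl k))⁻¹ := by
  have h0 : Tn p a ((inl k⁻¹ : PruferSd p) * inl k) = 1 := by
    rw [← map_mul, inv_mul_cancel, map_one]
    simp [Tn]
  rw [Tn_mul_right, conjTφ, conj_T_any_inl] at h0
  exact eq_inv_of_mul_eq_one_right h0

lemma conjP {a b : PruferSd p} (ha : a.right = dd p) (hb : b.right = dd p)
    (c : Prufer p) :
    conj (Tn p a b) (ι (PruferSd p) (inl c))
      = (Tn p (inl (c⁻¹ * c⁻¹)) b)⁻¹ * (Tn p a b * (Tn p a (inl (c⁻¹ * c⁻¹)))⁻¹) := by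
  rw [conjT, conj_g_inl p ha, conj_g_inl p hb]
  rw [Tn_mul_left]
  rw [absorb_right p _ _ _ (T_A_A p (c⁻¹ * c⁻¹) (c⁻¹ * c⁻¹))]
  rw [conjT, conj_inl_g p ha]
  obtain ⟨s, hs⟩ := decomp p (conj_right_eq p ha hb)
  rw [hs, absorb_right p _ _ _ (T_A_A p _ _), M_inv p hb]
  rw [Tn_mul_right, conjTφ, conjT, conj_inl_g p hb]
  obtain ⟨s', hs'⟩ := decomp p (conj_right_eq p hb ha)
  rw [hs', absorb_left p _ _ _ (T_A_A p _ _), L_inv p]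

lemma commMt {a b : PruferSd p} (ha : a.right = dd p) (hb : b.right = dd p)
    (k : Prufer p) :
    conj (Tn p (inl k) b) (Tn p a b) = Tn p (inl k) b := by
  have hz := right_one_eq_inl p (comm_right_one p ha hb)
  rw [show Tn p a b = comm (ι (PruferSd p) a) (ιφ (PruferSd p) b) from rfl]
  rw [conj_T_comm, hz]
  exact conj_T_inl_any p k b _

lemma commLt {a b : PruferSd p} (ha : a.right = dd p) (hb : b.right = dd p)
    (k : Prufer p) :
    conj (Tn p a (inl k)) (Tn p a b) = Tn p a (inl k) := by
  have hz := right_one_eq_inl p (comm_right_one p ha hb)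
  rw [show Tn p a b = comm (ι (PruferSd p) a) (ιφ (PruferSd p) b) from rfl]
  rw [conj_T_comm, hz]
  exact conj_T_any_inl p a k _

lemma ML_key {a b : PruferSd p} (ha : a.right = dd p) (hb : b.right = dd p)
    (k : Prufer p) :
    Tn p a (inl (k ^ 4)) = (Tn p (inl (k ^ 4)) b)⁻¹ := by
  have h1 : conj (Tn p a b) (Tn p (inl k) b) = Tn p a b :=
    conj_eq_of_commute (commute_of_conj (commMt p ha hb k)).symm
  have h2 : conj (Tn p a b) (Tn p (inl k) b)
      = conj (Tn p a b) (ι (PruferSd p) (inl (k⁻¹ * k⁻¹))) := by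
    rw [show Tn p (inl k) b
        = comm (ι (PruferSd p) (inl k)) (ιφ (PruferSd p) b) from rfl]
    rw [conj_T_comm, comm_inl_g p hb]
  have h3 := conjP p ha hb (k⁻¹ * k⁻¹)
  have hj : (k⁻¹ * k⁻¹)⁻¹ * (k⁻¹ * k⁻¹)⁻¹ = k ^ 4 := by group
  rw [hj] at h3
  have h4 : Tn p a b = (Tn p (inl (k ^ 4)) b)⁻¹
      * (Tn p a b * (Tn p a (inl (k ^ 4)))⁻¹) := by
    rw [← h3, ← h2, h1]
  have hL : Commute (Tn p a (inl (k ^ 4))) (Tn p a b) :=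
    commute_of_conj (commLt p ha hb (k ^ 4))
  have h5 : Tn p a b * (Tn p a (inl (k ^ 4)))⁻¹
      = (Tn p a (inl (k ^ 4)))⁻¹ * Tn p a b := (hL.inv_left.eq).symm
  rw [h5, ← mul_assoc] at h4
  have h6 : (Tn p (inl (k ^ 4)) b)⁻¹ * (Tn p a (inl (k ^ 4)))⁻¹ = 1 :=
    right_eq_mul.mp h4
  have h7 := eq_inv_of_mul_eq_one_left h6
  rw [inv_inv] at h7
  exact h7.symm
  
lemma conj_T_dd {a b : PruferSd p} (ha : a.right = dd p) (hb : b.right = dd p)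
    (c : Prufer p) :
    conj (Tn p a b) (ι (PruferSd p) (inl c)) = Tn p a b := by
  obtain ⟨k, hk⟩ := prufer_fourth p (c⁻¹ * c⁻¹)
  have h3 := conjP p ha hb c
  rw [← hk] at h3
  rw [h3, ML_key p ha hb k, inv_inv]
  have hC := commute_of_conj (commMt p ha hb (k ^ 4))
  rw [← hC.eq, inv_mul_cancel_left]

lemma conj_T_A (a b : PruferSd p) (c : Prufer p) :
    conj (Tn p a b) (ι (PruferSd p) (inl c)) = Tn p a b := by
  rcases mem_invC2 p a.right with h1 | h1
  · rw [right_one_eq_inl p h1]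
    exact conj_T_inl_any p _ b c
  · rcases mem_invC2 p b.right with h2 | h2
    · rw [right_one_eq_inl p h2]
      exact conj_T_any_inl p a _ c
    · exact conj_T_dd p h1 h2 c

end MainCase


section Final
variable (p : ℕ) [Fact p.Prime]

open SemidirectProduct

lemma conj_T_gen (a' b' g : PruferSd p) :
    conj (Tn p a' b') (ι (PruferSd p) g)
      = conj (Tn p a' b') (ι (PruferSd p) (inr g.right)) := by
  conv_lhs => rw [← SemidirectProduct.inl_left_mul_inr_right g]
  rw [ι_mul, conj_mul, conj_T_A]

theorem prufer_tensor_conj_le_four' (x : Nu (PruferSd p))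
    (hx : ∃ a b : PruferSd p,
      x = comm (ι (PruferSd p) a) (ιφ (PruferSd p) b)) :
    (conjugatesOf x).Finite ∧ Nat.card (conjugatesOf x) ≤ 4 := by
  obtain ⟨a, b, rfl⟩ := hx
  have hxT : comm (ι (PruferSd p) a) (ιφ (PruferSd p) b) = Tn p a b := rfl
  rw [hxT]
  set D : PruferSd p := inr (dd p) with hD
  set S : Set (Nu (PruferSd p)) :=
    {Tn p a b, conj (Tn p a b) (ι (PruferSd p) D)} with hS
  have hfinS : S.Finite := (Set.finite_singleton _).insert _
  have htS : Tn p a b ∈ S := Or.inl rfl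
  have hSform : ∀ s ∈ S, ∃ a' b', s = Tn p a' b' := by
    intro s hs
    rcases hs with rfl | hs2
    · exact ⟨a, b, rfl⟩
    · refine ⟨conj a D, conj b D, ?_⟩
      rw [hs2, conjT]
  have hDD : D * D = 1 := by
    rw [hD, ← map_mul, dd_sq, map_one]
  have step : ∀ s ∈ S, ∀ g : PruferSd p, conj s (ι (PruferSd p) g) ∈ S := by
    intro s hs g
    obtain ⟨a', b', rfl⟩ := hSform s hs
    rw [conj_T_gen]
    rcases mem_invC2 p g.right with h | h
    · rw [h, map_one, ι_one, conj_one_right]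
      exact hs
    · rw [h]
      rcases hs with heq | heq
    -- the two cases
      · rw [heq]
        exact Or.inr rfl
      · rw [heq, ← conj_mul, ← ι_mul, ← hD, hDD, ι_one, conj_one_right]
        exact Or.inl rfl
  have stepφ : ∀ s ∈ S, ∀ g : PruferSd p, conj s (ιφ (PruferSd p) g) ∈ S := by
    intro s hs g
    obtain ⟨a', b', rfl⟩ := hSform s hs
    rw [show Tn p a' b' = comm (ι (PruferSd p) a') (ιφ (PruferSd p) b') from rfl,
      conj_tensor_φ]
    exact step (Tn p a' b') hs g
  let Ksub : Subgroup (Nu (PruferSd p)) :=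
    { carrier := {u | ∀ s ∈ S, conj s u ∈ S ∧ conj s u⁻¹ ∈ S}
      one_mem' := by
        intro s hs
        rw [inv_one, conj_one_right]
        exact ⟨hs, hs⟩
      mul_mem' := by
        intro u v hu hv s hs
        constructor
        · rw [conj_mul]
          exact (hv _ ((hu s hs).1)).1
        · rw [mul_inv_rev, conj_mul]
          exact (hu _ ((hv s hs).2)).2
      inv_mem' := by
        intro u hu s hs
        refine ⟨(hu s hs).2, ?_⟩
        rw [inv_inv]
        exact (hu s hs).1 }
  have hgen : ∀ z : PruferSd p ⊕ PruferSd p,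
      (PresentedGroup.of z : Nu (PruferSd p)) ∈ Ksub := by
    intro z
    rcases z with g | g
    · intro s hs
      refine ⟨step s hs g, ?_⟩
      show conj s ((ι (PruferSd p) g)⁻¹) ∈ S
      rw [← ι_inv]
      exact step s hs g⁻¹
    · intro s hs
      refine ⟨stepφ s hs g, ?_⟩
      show conj s ((ιφ (PruferSd p) g)⁻¹) ∈ S
      rw [← ιφ_inv]
      exact stepφ s hs g⁻¹
  have hK : ∀ u : Nu (PruferSd p), u ∈ Ksub :=
    fun u => PresentedGroup.generated_by _ Ksub hgen u
  have hsub : conjugatesOf (Tn p a b) ⊆ S := by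
    intro y hy
    obtain ⟨c, hc⟩ := isConj_iff.mp hy
    have hy2 : y = conj (Tn p a b) c⁻¹ := by
      rw [← hc]
      unfold conj
      group
    rw [hy2]
    exact ((hK c⁻¹) (Tn p a b) htS).1
  constructor
  · exact hfinS.subset hsub
  · calc Nat.card (conjugatesOf (Tn p a b))
        = (conjugatesOf (Tn p a b)).ncard := (Nat.card_coe_set_eq _)
      _ ≤ S.ncard := Set.ncard_le_ncard hsub hfinS
      _ ≤ 2 := by
          rw [hS]
          refine le_trans (Set.ncard_insert_le _ _) ?_
          simp [Set.ncard_singleton]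
      _ ≤ 4 := by norm_num

end Final


/-- Every tensor of `G = C_{p^∞} ⋊ C₂` has at most `4` conjugates in `ν(G)`. -/
theorem prufer_tensor_conj_le_four (p : ℕ) [Fact p.Prime] :
    ∀ x ∈ tensorSet (PruferSd p),
      (conjugatesOf x).Finite ∧ Nat.card (conjugatesOf x) ≤ 4 := by
  intro x hx
  exact prufer_tensor_conj_le_four' p x hx

end TensorNu
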